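/- Let K be a convex body in ℂⁿ with 2 ≤ k < n, and suppose every k-dimensional complex affine section of K through a fixed point p₀ ∈ int K is a complex ellipsoid (of dimension k). Then K is a complex ellipsoid. -/

import Mathlib

def IsConvexBody {n : ℕ} (K : Set (EuclideanSpace ℂ (Fin n))) : Prop :=
  IsCompact K ∧ Convex ℝ K ∧ (interior K).Nonempty

def IsComplexEllipsoid {n : ℕ} (K : Set (EuclideanSpace ℂ (Fin n))) : Prop :=
  ∃ (L : EuclideanSpace ℂ (Fin n) ≃ₗ[ℂ] EuclideanSpace ℂ (Fin n))
    (b : EuclideanSpace ℂ (Fin n)),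
    K = (fun x => L x + b) '' Metric.closedBall 0 1

/-- `A` is a `k`-dimensional complex ellipsoid: the image of the closed unit
ball of ℂᵏ under an injective ℂ-affine map. -/
def IsEllipsoidOfDim {n : ℕ} (k : ℕ) (A : Set (EuclideanSpace ℂ (Fin n))) : Prop :=
  ∃ (f : EuclideanSpace ℂ (Fin k) →ₗ[ℂ] EuclideanSpace ℂ (Fin n))
    (b : EuclideanSpace ℂ (Fin n)), Function.Injective f ∧
    A = (fun x => f x + b) '' Metric.closedBall 0 1

-- Auxiliary lemmas
open Module Metric
open scoped ComplexInnerProductSpace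



open Module Metric

variable {n : ℕ}

/-- extension of a submodule to one of prescribed finrank -/
lemma ext_submodule {E : Type*} [AddCommGroup E] [Module ℂ E] [FiniteDimensional ℂ E] :
    ∀ (d : ℕ) (W : Submodule ℂ E) (m : ℕ), finrank ℂ W + d = m → m ≤ finrank ℂ E →
      ∃ V : Submodule ℂ E, W ≤ V ∧ finrank ℂ V = m := by
  intro d
  induction d with
  | zero => intro W m h hm; exact ⟨W, le_rfl, by simpa using h⟩
  | succ d ih =>
    intro W m h hm
    have hWlt : finrank ℂ W < finrank ℂ E := by omega
    have hWne : W ≠ ⊤ := by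
      intro hW
      rw [hW, finrank_top] at hWlt
      omega
    obtain ⟨v, hv⟩ : ∃ v, v ∉ W := by
      by_contra hc
      push_neg at hc
      exact hWne (Submodule.eq_top_iff'.2 hc)
    have hv0 : v ≠ 0 := fun h0 => hv (h0 ▸ W.zero_mem)
    have hinf : W ⊓ (ℂ ∙ v) = ⊥ := by
      rw [Submodule.eq_bot_iff]
      rintro x ⟨hxW, hxs⟩
      rcases Submodule.mem_span_singleton.1 hxs with ⟨c, rfl⟩
      rcases eq_or_ne c 0 with rfl | hc
      · simp
      · exact absurd (by simpa [smul_smul, inv_mul_cancel₀ hc] using W.smul_mem c⁻¹ hxW) hv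
    have hfr : finrank ℂ ↥(W ⊔ (ℂ ∙ v)) = finrank ℂ W + 1 := by
      have := Submodule.finrank_sup_add_finrank_inf_eq W (ℂ ∙ v)
      rw [hinf, finrank_bot, finrank_span_singleton hv0] at this
      omega
    obtain ⟨V, hle, hV⟩ := ih (W ⊔ (ℂ ∙ v)) m (by omega) hm
    exact ⟨V, le_trans le_sup_left hle, hV⟩

/-- uniqueness of center/radius of closed balls in ℂ -/
lemma cball_sub (τ τ' : ℂ) (r r' : ℝ) (hr : 0 < r)
    (h : closedBall τ r ⊆ closedBall τ' r') : ‖τ - τ'‖ + r ≤ r' := by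
  rcases eq_or_ne τ τ' with rfl | hne
  · have := h (mem_closedBall.2 (by simp [dist_eq_norm, abs_of_nonneg hr.le] : dist (τ + r) τ ≤ r))
    simp only [mem_closedBall, dist_eq_norm, add_sub_cancel_left] at this
    rw [Complex.norm_real, Real.norm_eq_abs, abs_of_nonneg hr.le] at this
    simpa using this
  · set u : ℂ := (τ - τ') / ‖τ - τ'‖ with hu
    have hne0 : ‖τ - τ'‖ ≠ 0 := norm_ne_zero_iff.2 (sub_ne_zero.2 hne)
    have hnu : ‖u‖ = 1 := by
      rw [hu, norm_div, Complex.norm_real, Real.norm_eq_abs, abs_of_nonneg (norm_nonneg _),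
        div_self hne0]
    have hmem : τ + r • u ∈ closedBall τ r := by
      simp [dist_eq_norm, norm_smul, hnu, abs_of_nonneg hr.le]
    have hle := h hmem
    simp only [mem_closedBall, dist_eq_norm] at hle
    have hC : (‖τ - τ'‖ : ℂ) ≠ 0 := by exact_mod_cast hne0
    have hτu' : (‖τ - τ'‖ : ℂ) * u = τ - τ' := by
      rw [hu, ← mul_div_assoc, mul_comm, mul_div_assoc, div_self hC, mul_one]
    have heq : τ + r • u - τ' = ((‖τ - τ'‖ + r : ℝ) : ℂ) * u := by
      rw [Complex.real_smul]
      push_cast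
      rw [add_mul, hτu']
      ring
    rw [heq, norm_mul, hnu, mul_one, Complex.norm_real, Real.norm_eq_abs,
      abs_of_nonneg (by positivity)] at hle
    exact hle

lemma ball_unique {τ τ' : ℂ} {r r' : ℝ} (hr : 0 < r) (hr' : 0 < r')
    (h : closedBall τ r = closedBall τ' r') : τ = τ' ∧ r = r' := by
  have h1 := cball_sub τ τ' r r' hr h.subset
  have h2 := cball_sub τ' τ r' r hr' h.symm.subset
  have hn : ‖τ' - τ‖ = ‖τ - τ'‖ := by rw [← norm_neg]; ring_nf
  rw [hn] at h2
  have hτ : ‖τ - τ'‖ = 0 := by linarith [norm_nonneg (τ - τ')]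
  refine ⟨sub_eq_zero.1 (norm_eq_zero.1 hτ), ?_⟩
  rw [hτ] at h1 h2
  linarith



set_option maxHeartbeats 800000 in
lemma section_normal_form {n k : ℕ} (K : Set (EuclideanSpace ℂ (Fin n)))
    (p₀ : EuclideanSpace ℂ (Fin n)) (hp₀ : p₀ ∈ interior K)
    (V : Submodule ℂ (EuclideanSpace ℂ (Fin n))) (hV : finrank ℂ V = k)
    (hell : IsEllipsoidOfDim k (((· + p₀) '' (V : Set (EuclideanSpace ℂ (Fin n)))) ∩ K)) :
    ∃ (e : V →ₗ[ℂ] EuclideanSpace ℂ (Fin k)) (c : EuclideanSpace ℂ (Fin k)),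
      Function.Injective e ∧ ‖c‖ < 1 ∧
      ∀ w : V, ((w : EuclideanSpace ℂ (Fin n)) + p₀ ∈ K ↔ ‖e w - c‖ ≤ 1) := by
  obtain ⟨f, b, hfinj, hEq⟩ := hell
  set S : Set (EuclideanSpace ℂ (Fin n)) :=
    ((· + p₀) '' (V : Set (EuclideanSpace ℂ (Fin n)))) ∩ K with hS
  have hbS : b ∈ S := by
    rw [hEq]
    exact ⟨0, by simp, by simp⟩
  have hbV : b - p₀ ∈ V := by
    obtain ⟨⟨v, hvV, hv⟩, _⟩ := hbS
    simp only at hv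
    rw [← hv]
    simpa using hvV
  -- range of f is inside V
  have hrange0 : ∀ y ∈ closedBall (0 : EuclideanSpace ℂ (Fin k)) 1, f y ∈ V := by
    intro y hy
    have : f y + b ∈ S := by
      rw [hEq]; exact ⟨y, hy, rfl⟩
    obtain ⟨⟨v, hvV, hv⟩, _⟩ := this
    simp only at hv
    have h3 : f y = v - (b - p₀) := by
      have h4 := eq_sub_of_add_eq hv.symm
      rw [h4]; abel
    rw [h3]
    exact V.sub_mem hvV hbV
  have hrange : ∀ y, f y ∈ V := by
    intro y
    set c : ℝ := ‖y‖ + 1 with hc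
    have hc0 : (0:ℝ) < c := by positivity
    have h1 : ((c : ℂ))⁻¹ • y ∈ closedBall (0 : EuclideanSpace ℂ (Fin k)) 1 := by
      simp only [mem_closedBall, dist_zero_right, norm_smul, norm_inv]
      rw [Complex.norm_real, Real.norm_eq_abs, abs_of_pos hc0]
      rw [inv_mul_le_iff₀ hc0, mul_one, hc]
      linarith
    have h2 : f y = (c : ℂ) • f (((c : ℂ))⁻¹ • y) := by
      rw [← map_smul, smul_smul, mul_inv_cancel₀ (by exact_mod_cast hc0.ne'), one_smul]
    rw [h2]
    exact V.smul_mem _ (hrange0 _ h1)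
  set f' : EuclideanSpace ℂ (Fin k) →ₗ[ℂ] V := f.codRestrict V hrange with hf'
  have hf'inj : Function.Injective f' := by
    intro a a' h
    apply hfinj
    simpa [hf', Subtype.ext_iff] using h
  have hdim : finrank ℂ (EuclideanSpace ℂ (Fin k)) = finrank ℂ V := by
    rw [finrank_euclideanSpace_fin, hV]
  set E : EuclideanSpace ℂ (Fin k) ≃ₗ[ℂ] V := f'.linearEquivOfInjective hf'inj hdim with hE
  have hEapp : ∀ y, ((E y : V) : EuclideanSpace ℂ (Fin n)) = f y := fun y => by
    rw [hE, LinearMap.linearEquivOfInjective_apply]; rfl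
  set vb : V := ⟨b - p₀, hbV⟩ with hvb
  set c : EuclideanSpace ℂ (Fin k) := E.symm vb with hcdef
  have hmem : ∀ w : V, ((w : EuclideanSpace ℂ (Fin n)) + p₀ ∈ K ↔ ‖E.symm w - c‖ ≤ 1) := by
    intro w
    have hwS : (w : EuclideanSpace ℂ (Fin n)) + p₀ ∈ K ↔
        (w : EuclideanSpace ℂ (Fin n)) + p₀ ∈ S := by
      constructor
      · intro h
        exact ⟨⟨w, w.2, rfl⟩, h⟩
      · exact fun h => h.2
    rw [hwS, hEq]
    constructor
    · rintro ⟨y, hy, hyeq⟩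
      simp only at hyeq
      have hEy : E y = w - vb := by
        apply Subtype.ext
        rw [hEapp]
        simp only [hvb, Submodule.coe_sub]
        have h4 := eq_sub_of_add_eq hyeq
        rw [h4]; abel
      have hy' : y = E.symm (w - vb) := by rw [← hEy, LinearEquiv.symm_apply_apply]
      have h5 : E.symm w - c = E.symm (w - vb) := by rw [map_sub, hcdef]
      rw [h5, ← hy']
      simpa using hy
    · intro h
      refine ⟨E.symm (w - vb), by simpa [map_sub, ← hcdef] using h, ?_⟩
      simp only
      have : ((E (E.symm (w - vb)) : V) : EuclideanSpace ℂ (Fin n)) = f (E.symm (w - vb)) :=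
        hEapp _
      rw [LinearEquiv.apply_symm_apply] at this
      rw [← this]
      simp only [hvb, Submodule.coe_sub]
      abel
  -- ‖c‖ < 1
  have hc1 : ‖c‖ < 1 := by
    rcases eq_or_ne c 0 with hc0 | hc0
    · simp [hc0]
    · obtain ⟨ε, hε, hball⟩ := Metric.mem_nhds_iff.1 (mem_interior_iff_mem_nhds.1 hp₀)
      set z : V := E c with hz
      set δ : ℝ := ε / (2 * (‖(z : EuclideanSpace ℂ (Fin n))‖ + 1)) with hδ
      have hδ0 : 0 < δ := by positivity
      set w : V := (-(δ : ℂ)) • z with hw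
      have hwK : (w : EuclideanSpace ℂ (Fin n)) + p₀ ∈ K := by
        apply hball
        simp only [mem_ball, dist_eq_norm, add_sub_cancel_right, hw]
        rw [Submodule.coe_smul, norm_smul]
        have : ‖(-(δ : ℂ))‖ = δ := by
          rw [norm_neg, Complex.norm_real, Real.norm_eq_abs, abs_of_pos hδ0]
        rw [this, hδ]
        rw [div_mul_eq_mul_div, div_lt_iff₀ (by positivity)]
        nlinarith [norm_nonneg (z : EuclideanSpace ℂ (Fin n)), hε]
      have := (hmem w).1 hwK
      have hsymm : E.symm w = (-(δ : ℂ)) • c := by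
        rw [hw, map_smul, hz, LinearEquiv.symm_apply_apply]
      rw [hsymm] at this
      have hnorm : ‖(-(δ : ℂ)) • c - c‖ = (1 + δ) * ‖c‖ := by
        have h6 : (-(δ : ℂ)) • c - c = -(((1 : ℂ) + (δ:ℂ)) • c) := by
          rw [add_smul, one_smul, neg_smul]; abel
        have hsc : (1 : ℂ) + (δ:ℂ) = ((1 + δ : ℝ) : ℂ) := by push_cast; ring
        rw [h6, norm_neg, norm_smul, hsc, Complex.norm_real, Real.norm_eq_abs,
          abs_of_pos (by linarith)]
      rw [hnorm] at this
      have hcpos : 0 < ‖c‖ := norm_pos_iff.2 hc0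
      nlinarith
  refine ⟨E.symm.toLinearMap, c, E.symm.injective, hc1, fun w => ?_⟩
  rw [show (E.symm.toLinearMap w : EuclideanSpace ℂ (Fin k)) = E.symm w from rfl]
  exact hmem w

open scoped ComplexInnerProductSpace

lemma norm_le_iff_sq {E : Type*} [NormedAddCommGroup E] (x : E) (s : ℝ) (hs : 0 ≤ s) :
    ‖x‖ ≤ s ↔ ‖x‖^2 ≤ s^2 := by
  constructor
  · intro h; nlinarith [norm_nonneg x]
  · intro h; nlinarith [norm_nonneg x]

lemma disk_lemma {n k : ℕ} {K : Set (EuclideanSpace ℂ (Fin n))}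
    {p₀ : EuclideanSpace ℂ (Fin n)} {V : Submodule ℂ (EuclideanSpace ℂ (Fin n))}
    (e : V →ₗ[ℂ] EuclideanSpace ℂ (Fin k)) (c : EuclideanSpace ℂ (Fin k)) (hc : ‖c‖ < 1)
    (hmem : ∀ w : V, ((w : EuclideanSpace ℂ (Fin n)) + p₀ ∈ K ↔ ‖e w - c‖ ≤ 1))
    (v : V) (hv : e v ≠ 0) :
    ∃ (τ : ℂ) (r : ℝ), ‖τ‖ < r ∧
      {t : ℂ | t • (v : EuclideanSpace ℂ (Fin n)) + p₀ ∈ K} = closedBall τ r ∧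
      τ = (⟪e v, c⟫ : ℂ) / ((‖e v‖^2 : ℝ) : ℂ) ∧
      r^2 - ‖τ‖^2 = (1 - ‖c‖^2) / ‖e v‖^2 := by
  set a : EuclideanSpace ℂ (Fin k) := e v with ha
  set α : ℝ := ‖a‖^2 with hα
  have hα0 : 0 < α := pow_pos (norm_pos_iff.2 hv) 2
  set σ : ℂ := ⟪a, c⟫ with hσ
  set τ : ℂ := σ / ((α : ℝ) : ℂ) with hτ
  have hγ : (0:ℝ) < 1 - ‖c‖^2 := by nlinarith [norm_nonneg c]
  set R2 : ℝ := ‖τ‖^2 + (1 - ‖c‖^2) / α with hR2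
  have hR2pos : ‖τ‖^2 < R2 := by
    rw [hR2]
    have : 0 < (1 - ‖c‖^2)/α := by positivity
    linarith
  set r : ℝ := Real.sqrt R2 with hr
  have hR2nonneg : 0 ≤ R2 := le_trans (by positivity) hR2pos.le
  have hrsq : r^2 = R2 := Real.sq_sqrt hR2nonneg
  have hτr : ‖τ‖ < r := by
    have h1 : ‖τ‖ = Real.sqrt (‖τ‖^2) := (Real.sqrt_sq (norm_nonneg _)).symm
    rw [h1, hr]
    exact Real.sqrt_lt_sqrt (by positivity) hR2pos
  have hr0 : 0 < r := lt_of_le_of_lt (norm_nonneg τ) hτr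
  refine ⟨τ, r, hτr, ?_, by rw [hτ, hσ, hα], by rw [hrsq, hR2, hα]; ring⟩
  -- identities
  have hστ : σ = ((α : ℝ) : ℂ) * τ := by
    rw [hτ, mul_div_cancel₀]
    exact_mod_cast hα0.ne'
  ext t
  simp only [Set.mem_setOf_eq, mem_closedBall, dist_eq_norm]
  have h1 : t • (v : EuclideanSpace ℂ (Fin n)) + p₀ ∈ K ↔ ‖t • a - c‖ ≤ 1 := by
    have h := hmem (t • v)
    rwa [Submodule.coe_smul, map_smul] at h
  rw [h1, norm_le_iff_sq _ _ (by norm_num), norm_le_iff_sq _ _ hr0.le, one_pow, hrsq]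
  have expand1 : ‖t • a - c‖^2 = ‖t‖^2 * α - 2 * ((starRingEnd ℂ) t * σ).re + ‖c‖^2 := by
    rw [norm_sub_sq (𝕜 := ℂ), inner_smul_left, norm_smul]
    have hre : RCLike.re ((starRingEnd ℂ) t * ⟪a, c⟫) = ((starRingEnd ℂ) t * σ).re := by
      rw [hσ]; rfl
    rw [hre]
    rw [mul_pow, hα]
  have expand2 : ‖t - τ‖^2 = ‖t‖^2 - 2 * ((starRingEnd ℂ) t * τ).re + ‖τ‖^2 := by
    rw [Complex.sq_norm,
      Complex.sq_norm, Complex.sq_norm, Complex.normSq_sub]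
    have : (t * (starRingEnd ℂ) τ).re = ((starRingEnd ℂ) t * τ).re := by
      rw [show (starRingEnd ℂ) t * τ = (starRingEnd ℂ) (t * (starRingEnd ℂ) τ) by
        rw [map_mul, Complex.conj_conj]]
      rw [Complex.conj_re]
    rw [this]
    ring
  have hre2 : ((starRingEnd ℂ) t * σ).re = α * ((starRingEnd ℂ) t * τ).re := by
    rw [hστ, show (starRingEnd ℂ) t * (((α:ℝ):ℂ) * τ) = ((α:ℝ):ℂ) * ((starRingEnd ℂ) t * τ) by
      ring, Complex.re_ofReal_mul]
  rw [expand1, expand2, hR2]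
  constructor
  · intro h
    have key : (‖t‖^2 - 2*((starRingEnd ℂ) t * τ).re + ‖τ‖^2 - (‖τ‖^2 + (1-‖c‖^2)/α)) * α
        = ‖t‖^2 * α - 2*((starRingEnd ℂ) t * σ).re + ‖c‖^2 - 1 := by
      field_simp [hre2]
      rw [hre2]; ring
    nlinarith [key]
  · intro h
    have key : (‖t‖^2 - 2*((starRingEnd ℂ) t * τ).re + ‖τ‖^2 - (‖τ‖^2 + (1-‖c‖^2)/α)) * α
        = ‖t‖^2 * α - 2*((starRingEnd ℂ) t * σ).re + ‖c‖^2 - 1 := by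
      field_simp [hre2]
      rw [hre2]; ring
    nlinarith [key]



structure NormData (n : ℕ) : Type where
  N : EuclideanSpace ℂ (Fin n) → ℝ
  N_zero : N 0 = 0
  eq_zero : ∀ v, N v = 0 → v = 0
  add_le : ∀ u v, N (u + v) ≤ N u + N v
  smul_eq : ∀ (l : ℂ) (v : EuclideanSpace ℂ (Fin n)), N (l • v) = ‖l‖ * N v
  par : ∀ u v, N (u + v) * N (u + v) + N (u - v) * N (u - v)
      = 2 * (N u * N u + N v * N v)

def Syn {n : ℕ} (_d : NormData n) : Type := EuclideanSpace ℂ (Fin n)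

instance {n : ℕ} (d : NormData n) : AddCommGroup (Syn d) :=
  inferInstanceAs (AddCommGroup (EuclideanSpace ℂ (Fin n)))

noncomputable instance {n : ℕ} (d : NormData n) : Module ℂ (Syn d) :=
  inferInstanceAs (Module ℂ (EuclideanSpace ℂ (Fin n)))

noncomputable instance {n : ℕ} (d : NormData n) : NormedAddCommGroup (Syn d) :=
  AddGroupNorm.toNormedAddCommGroup
    { toAddGroupSeminorm :=
        { toFun := fun x => d.N x
          map_zero' := d.N_zero
          add_le' := d.add_le
          neg' := fun v => by
            have h := d.smul_eq (-1) v
            exact (congrArg d.N (neg_one_smul ℂ (v : EuclideanSpace ℂ (Fin n))).symm).trans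
              (h.trans (by simp)) }
      eq_zero_of_map_eq_zero' := d.eq_zero }

noncomputable instance {n : ℕ} (d : NormData n) : NormedSpace ℂ (Syn d) where
  norm_smul_le l v := le_of_eq (d.smul_eq l v)

noncomputable instance {n : ℕ} (d : NormData n) : InnerProductSpace ℂ (Syn d) :=
  InnerProductSpace.ofNorm ℂ d.par

instance {n : ℕ} (d : NormData n) : FiniteDimensional ℂ (Syn d) :=
  inferInstanceAs (FiniteDimensional ℂ (EuclideanSpace ℂ (Fin n)))

noncomputable def synEquiv {n : ℕ} (d : NormData n) : EuclideanSpace ℂ (Fin n) ≃ₗ[ℂ] Syn d :=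
  LinearEquiv.refl ℂ (EuclideanSpace ℂ (Fin n))

lemma syn_norm {n : ℕ} (d : NormData n) (x : EuclideanSpace ℂ (Fin n)) :
    ‖synEquiv d x‖ = d.N x := rfl

lemma syn_finrank {n : ℕ} (d : NormData n) : finrank ℂ (Syn d) = n :=
  ((synEquiv d).finrank_eq.symm).trans finrank_euclideanSpace_fin

lemma norm_le_iff_sq' {E : Type*} [NormedAddCommGroup E] (x : E) (s : ℝ) (hs : 0 ≤ s) :
    ‖x‖ ≤ s ↔ ‖x‖^2 ≤ s^2 := by
  constructor
  · intro h; nlinarith [norm_nonneg x]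
  · intro h; nlinarith [norm_nonneg x]

lemma ellipsoid_of_data {n : ℕ} (K : Set (EuclideanSpace ℂ (Fin n)))
    (p₀ : EuclideanSpace ℂ (Fin n)) (d : NormData n) (S : EuclideanSpace ℂ (Fin n) → ℂ)
    (hSadd : ∀ u v, S (u + v) = S u + S v)
    (hSsmul : ∀ (l : ℂ) (v : EuclideanSpace ℂ (Fin n)), S (l • v) = (starRingEnd ℂ) l * S v)
    (hmem : ∀ x : EuclideanSpace ℂ (Fin n), x + p₀ ∈ K ↔ d.N x ^ 2 - 2 * (S x).re - 1 ≤ 0) :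
    IsComplexEllipsoid K := by
  classical
  set T := synEquiv d with hT
  -- the conjugate-linear functional as a linear functional
  set φ : Syn d →ₗ[ℂ] ℂ :=
    { toFun := fun x => (starRingEnd ℂ) (S (T.symm x))
      map_add' := fun x y => by
        show (starRingEnd ℂ) (S (T.symm (x + y))) = _
        rw [map_add, hSadd, map_add]
      map_smul' := fun l x => by
        show (starRingEnd ℂ) (S (T.symm (l • x))) = _
        rw [map_smul, hSsmul, map_mul, Complex.conj_conj]
        rfl } with hφ
  set w : Syn d := (InnerProductSpace.toDual ℂ (Syn d)).symm (LinearMap.toContinuousLinearMap φ)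
    with hw
  have hwx : ∀ x : Syn d, ⟪w, x⟫ = (starRingEnd ℂ) (S (T.symm x)) := by
    intro x
    rw [hw, InnerProductSpace.toDual_symm_apply]
    rfl
  have hSw : ∀ x : EuclideanSpace ℂ (Fin n), S x = ⟪T x, w⟫ := by
    intro x
    rw [← inner_conj_symm, hwx, Complex.conj_conj, LinearEquiv.symm_apply_apply]
  set ρ : ℝ := Real.sqrt (1 + ‖w‖^2) with hρ
  have hρpos : 0 < ρ := Real.sqrt_pos.2 (by positivity)
  have hρsq : ρ^2 = 1 + ‖w‖^2 := Real.sq_sqrt (by positivity)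
  have key : ∀ x : EuclideanSpace ℂ (Fin n), (x + p₀ ∈ K ↔ ‖T x - w‖ ≤ ρ) := by
    intro x
    rw [hmem, norm_le_iff_sq' _ _ hρpos.le, hρsq]
    have hns : ‖T x - w‖^2 = ‖T x‖^2 - 2 * RCLike.re ⟪T x, w⟫ + ‖w‖^2 :=
      norm_sub_sq (𝕜 := ℂ) _ _
    rw [hns, syn_norm]
    have : RCLike.re ⟪T x, w⟫ = (S x).re := by rw [hSw]; rfl
    rw [this]
    constructor <;> intro h <;> linarith
  -- the orthonormal basis and the final linear equivalence
  set ob : OrthonormalBasis (Fin n) ℂ (Syn d) :=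
    (stdOrthonormalBasis ℂ (Syn d)).reindex (finCongr (syn_finrank d)) with hob
  set U : EuclideanSpace ℂ (Fin n) ≃ₗᵢ[ℂ] Syn d := ob.repr.symm with hU
  set L : EuclideanSpace ℂ (Fin n) ≃ₗ[ℂ] EuclideanSpace ℂ (Fin n) :=
    (U.toLinearEquiv.trans
      (LinearEquiv.smulOfNeZero ℂ (Syn d) ((ρ : ℝ) : ℂ)
        (by exact_mod_cast hρpos.ne'))).trans T.symm with hL
  have hLz : ∀ z, L z = T.symm (((ρ : ℝ) : ℂ) • U z) := fun z => rfl
  refine ⟨L, T.symm w + p₀, ?_⟩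
  ext y
  simp only [Set.mem_image, mem_closedBall, dist_zero_right]
  constructor
  · intro hy
    have hx := (key (y - p₀)).1 (by rwa [sub_add_cancel])
    set X : Syn d := T (y - p₀) - w with hX
    refine ⟨U.symm ((((ρ : ℝ) : ℂ))⁻¹ • X), ?_, ?_⟩
    · rw [LinearIsometryEquiv.norm_map, norm_smul, norm_inv]
      rw [Complex.norm_real, Real.norm_eq_abs, abs_of_pos hρpos]
      rw [inv_mul_le_iff₀ hρpos, mul_one]
      exact hx
    · rw [hLz, LinearIsometryEquiv.apply_symm_apply, smul_smul,
        mul_inv_cancel₀ (by exact_mod_cast hρpos.ne' : ((ρ : ℝ) : ℂ) ≠ 0), one_smul]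
      rw [hX, map_sub, LinearEquiv.symm_apply_apply]
      abel
  · rintro ⟨z, hz, rfl⟩
    rw [← sub_add_cancel (L z + (T.symm w + p₀)) p₀] at *
    apply (key _).2
    have h1 : L z + (T.symm w + p₀) - p₀ = T.symm (((ρ : ℝ) : ℂ) • U z + w) := by
      rw [map_add, ← hLz]
      abel
    rw [h1, LinearEquiv.apply_symm_apply, add_sub_cancel_right, norm_smul]
    rw [Complex.norm_real, Real.norm_eq_abs, abs_of_pos hρpos, LinearIsometryEquiv.norm_map]
    calc ρ * ‖z‖ ≤ ρ * 1 := by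
          exact mul_le_mul_of_nonneg_left hz hρpos.le
      _ = ρ := mul_one ρ

set_option maxHeartbeats 2000000 in
theorem stmt17 {n k : ℕ} (hk : 2 ≤ k) (hkn : k < n)
    (K : Set (EuclideanSpace ℂ (Fin n))) (hK : IsConvexBody K)
    (p₀ : EuclideanSpace ℂ (Fin n)) (hp₀ : p₀ ∈ interior K)
    (hsec : ∀ V : Submodule ℂ (EuclideanSpace ℂ (Fin n)), Module.finrank ℂ V = k →
      IsEllipsoidOfDim k (((· + p₀) '' (V : Set (EuclideanSpace ℂ (Fin n)))) ∩ K)) :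
    IsComplexEllipsoid K := by
  classical
  have hn : finrank ℂ (EuclideanSpace ℂ (Fin n)) = n := finrank_euclideanSpace_fin
  -- pair data: every two vectors lie in a `k`-dim section with normal form
  have hpair : ∀ u v : EuclideanSpace ℂ (Fin n),
      ∃ (V : Submodule ℂ (EuclideanSpace ℂ (Fin n)))
        (e : V →ₗ[ℂ] EuclideanSpace ℂ (Fin k)) (c : EuclideanSpace ℂ (Fin k)),
        u ∈ V ∧ v ∈ V ∧ Function.Injective e ∧ ‖c‖ < 1 ∧
        ∀ w : V, ((w : EuclideanSpace ℂ (Fin n)) + p₀ ∈ K ↔ ‖e w - c‖ ≤ 1) := by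
    intro u v
    set W := (ℂ ∙ u) ⊔ (ℂ ∙ v) with hW
    have hs1 : finrank ℂ (ℂ ∙ u) ≤ 1 := by
      rcases eq_or_ne u 0 with rfl | hu
      · rw [Submodule.span_zero_singleton]
        simp
      · rw [finrank_span_singleton hu]
    have hs2 : finrank ℂ (ℂ ∙ v) ≤ 1 := by
      rcases eq_or_ne v 0 with rfl | hv
      · rw [Submodule.span_zero_singleton]
        simp
      · rw [finrank_span_singleton hv]
    have hs3 : finrank ℂ W ≤ 2 := by
      have h := Submodule.finrank_sup_add_finrank_inf_eq (ℂ ∙ u) (ℂ ∙ v)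
      rw [← hW] at h
      omega
    obtain ⟨V, hle, hVk⟩ := ext_submodule (k - finrank ℂ W) W k (by omega)
      (by rw [hn]; omega)
    obtain ⟨e, c, hinj, hc, hmm⟩ := section_normal_form K p₀ hp₀ V hVk (hsec V hVk)
    exact ⟨V, e, c,
      hle (Submodule.mem_sup_left (Submodule.mem_span_singleton_self u)),
      hle (Submodule.mem_sup_right (Submodule.mem_span_singleton_self v)),
      hinj, hc, hmm⟩
  -- the disk on every complex line through p₀
  have hex : ∀ v : EuclideanSpace ℂ (Fin n), ∃ (τ : ℂ) (r : ℝ),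
      v ≠ 0 → (‖τ‖ < r ∧ {t : ℂ | t • v + p₀ ∈ K} = closedBall τ r) := by
    intro v
    rcases eq_or_ne v 0 with rfl | hv
    · exact ⟨0, 1, fun h => absurd rfl h⟩
    · obtain ⟨V, e, c, -, hvV, hinj, hc, hmm⟩ := hpair v v
      set v' : V := ⟨v, hvV⟩ with hv'
      have hv'0 : v' ≠ 0 := by
        intro h
        exact hv (by rw [← Submodule.coe_zero (p := V), ← h])
      have hev : e v' ≠ 0 := by
        intro h
        exact hv'0 (hinj (by rw [h, map_zero]))
      obtain ⟨τ, r, hlt, hset, -, -⟩ := disk_lemma e c hc hmm v' hev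
      exact ⟨τ, r, fun _ => ⟨hlt, hset⟩⟩
  choose τf rf hτr using hex
  -- the quadratic data
  set Qf : EuclideanSpace ℂ (Fin n) → ℝ :=
    fun v => if v = 0 then 0 else (rf v ^ 2 - ‖τf v‖ ^ 2)⁻¹ with hQf
  set Sf : EuclideanSpace ℂ (Fin n) → ℂ :=
    fun v => if v = 0 then 0 else τf v * (((rf v ^ 2 - ‖τf v‖ ^ 2)⁻¹ : ℝ) : ℂ) with hSf
  -- bridging: on any section of the family, Q and S have Hermitian normal form
  have hbridge : ∀ (V : Submodule ℂ (EuclideanSpace ℂ (Fin n)))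
      (e : V →ₗ[ℂ] EuclideanSpace ℂ (Fin k)) (c : EuclideanSpace ℂ (Fin k)),
      Function.Injective e → ‖c‖ < 1 →
      (∀ w : V, ((w : EuclideanSpace ℂ (Fin n)) + p₀ ∈ K ↔ ‖e w - c‖ ≤ 1)) →
      ∀ w : V, Qf ↑w = ‖e w‖ ^ 2 / (1 - ‖c‖ ^ 2) ∧
        Sf ↑w = (⟪e w, c⟫ : ℂ) / (((1 - ‖c‖ ^ 2) : ℝ) : ℂ) := by
    intro V e c hinj hc hmm w
    have hγ : (0:ℝ) < 1 - ‖c‖ ^ 2 := by nlinarith [norm_nonneg c]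
    rcases eq_or_ne w 0 with rfl | hw
    · constructor
      · simp [hQf]
      · simp [hSf]
    · have hwa : (w : EuclideanSpace ℂ (Fin n)) ≠ 0 := by
        intro h
        exact hw (by exact_mod_cast Subtype.ext h)
      have hev : e w ≠ 0 := by
        intro h
        exact hw (hinj (by rw [h, map_zero]))
      have hα : (0:ℝ) < ‖e w‖ ^ 2 := pow_pos (norm_pos_iff.2 hev) 2
      obtain ⟨τ, r, hlt, hset, hτeq, hreq⟩ := disk_lemma e c hc hmm w hev
      obtain ⟨h1, h2⟩ := hτr ↑w hwa
      have hrpos : 0 < rf ↑w := lt_of_le_of_lt (norm_nonneg _) h1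
      have hrpos' : 0 < r := lt_of_le_of_lt (norm_nonneg _) hlt
      obtain ⟨hτe, hre⟩ := ball_unique hrpos hrpos' (h2.symm.trans hset)
      have hgap : rf ↑w ^ 2 - ‖τf ↑w‖ ^ 2 = (1 - ‖c‖ ^ 2) / ‖e w‖ ^ 2 := by
        rw [hτe, hre, hreq]
      constructor
      · rw [hQf]
        simp only [if_neg hwa]
        rw [hgap]
        field_simp
      · rw [hSf]
        simp only [if_neg hwa]
        rw [hgap, hτe, hτeq]
        have hcast : (((1 - ‖c‖ ^ 2) / ‖e w‖ ^ 2)⁻¹ : ℝ) = ‖e w‖ ^ 2 / (1 - ‖c‖ ^ 2) := by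
          rw [inv_div]
        rw [hcast]
        have h1' : ((‖e w‖ ^ 2 : ℝ) : ℂ) ≠ 0 := by exact_mod_cast hα.ne'
        have h2' : (((1 - ‖c‖ ^ 2) : ℝ) : ℂ) ≠ 0 := by exact_mod_cast hγ.ne'
        push_cast at h1' h2' ⊢
        field_simp
        exact mul_div_cancel_right₀ _ (by exact_mod_cast (norm_pos_iff.2 hev).ne')
  -- the candidate norm
  set N : EuclideanSpace ℂ (Fin n) → ℝ := fun v => Real.sqrt (Qf v) with hNdef
  have hQnonneg : ∀ v, 0 ≤ Qf v := by
    intro v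
    obtain ⟨V, e, c, -, hv, hinj, hc, hmm⟩ := hpair v v
    have h := (hbridge V e c hinj hc hmm ⟨v, hv⟩).1
    rw [show ((⟨v, hv⟩ : V) : EuclideanSpace ℂ (Fin n)) = v from rfl] at h
    rw [h]
    have hγ : (0:ℝ) < 1 - ‖c‖ ^ 2 := by nlinarith [norm_nonneg c]
    positivity
  have hNsq : ∀ v, N v ^ 2 = Qf v := fun v => Real.sq_sqrt (hQnonneg v)
  have hγpos : ∀ c : EuclideanSpace ℂ (Fin k), ‖c‖ < 1 →
      (0:ℝ) < Real.sqrt (1 - ‖c‖ ^ 2) := by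
    intro c hc
    apply Real.sqrt_pos.2
    nlinarith [norm_nonneg c]
  have hNform : ∀ (V : Submodule ℂ (EuclideanSpace ℂ (Fin n)))
      (e : V →ₗ[ℂ] EuclideanSpace ℂ (Fin k)) (c : EuclideanSpace ℂ (Fin k)),
      Function.Injective e → ‖c‖ < 1 →
      (∀ w : V, ((w : EuclideanSpace ℂ (Fin n)) + p₀ ∈ K ↔ ‖e w - c‖ ≤ 1)) →
      ∀ w : V, N ↑w = ‖e w‖ / Real.sqrt (1 - ‖c‖ ^ 2) := by
    intro V e c hinj hc hmm w
    rw [hNdef]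
    simp only
    rw [(hbridge V e c hinj hc hmm w).1, Real.sqrt_div (by positivity) _,
      Real.sqrt_sq (norm_nonneg _)]
  -- NormData axioms
  have hN0 : N 0 = 0 := by
    rw [hNdef]
    simp [hQf]
  have hNeq0 : ∀ v, N v = 0 → v = 0 := by
    intro v hNv
    by_contra hv
    obtain ⟨V, e, c, -, hvV, hinj, hc, hmm⟩ := hpair v v
    have h := hNform V e c hinj hc hmm ⟨v, hvV⟩
    rw [show ((⟨v, hvV⟩ : V) : EuclideanSpace ℂ (Fin n)) = v from rfl, hNv] at h
    have hev : e ⟨v, hvV⟩ ≠ 0 := by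
      intro h0
      have h00 : e ⟨v, hvV⟩ = e 0 := by rw [h0, map_zero]
      exact hv (congrArg Subtype.val (hinj h00))
    rcases div_eq_zero_iff.1 h.symm with h' | h'
    · exact hev (norm_eq_zero.1 h')
    · exact absurd h' (hγpos c hc).ne'
  have hNadd : ∀ u v, N (u + v) ≤ N u + N v := by
    intro u v
    obtain ⟨V, e, c, huV, hvV, hinj, hc, hmm⟩ := hpair u v
    have h1 := hNform V e c hinj hc hmm ⟨u, huV⟩
    have h2 := hNform V e c hinj hc hmm ⟨v, hvV⟩
    have h3 := hNform V e c hinj hc hmm (⟨u, huV⟩ + ⟨v, hvV⟩)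
    rw [show (((⟨u, huV⟩ + ⟨v, hvV⟩ : V)) : EuclideanSpace ℂ (Fin n)) = u + v from rfl] at h3
    rw [h1, h2, h3, map_add, ← add_div]
    have := hγpos c hc
    gcongr
    exact norm_add_le _ _
  have hNsmul : ∀ (l : ℂ) v, N (l • v) = ‖l‖ * N v := by
    intro l v
    obtain ⟨V, e, c, -, hvV, hinj, hc, hmm⟩ := hpair v v
    have h1 := hNform V e c hinj hc hmm ⟨v, hvV⟩
    have h2 := hNform V e c hinj hc hmm (l • ⟨v, hvV⟩)
    rw [show (((l • ⟨v, hvV⟩ : V)) : EuclideanSpace ℂ (Fin n)) = l • v from rfl] at h2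
    rw [h1, h2, map_smul, norm_smul, mul_div_assoc]
  have hNpar : ∀ u v, N (u + v) * N (u + v) + N (u - v) * N (u - v)
      = 2 * (N u * N u + N v * N v) := by
    intro u v
    obtain ⟨V, e, c, huV, hvV, hinj, hc, hmm⟩ := hpair u v
    have h1 := hNform V e c hinj hc hmm ⟨u, huV⟩
    have h2 := hNform V e c hinj hc hmm ⟨v, hvV⟩
    have h3 := hNform V e c hinj hc hmm (⟨u, huV⟩ + ⟨v, hvV⟩)
    have h4 := hNform V e c hinj hc hmm (⟨u, huV⟩ - ⟨v, hvV⟩)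
    rw [show (((⟨u, huV⟩ + ⟨v, hvV⟩ : V)) : EuclideanSpace ℂ (Fin n)) = u + v from rfl] at h3
    rw [show (((⟨u, huV⟩ - ⟨v, hvV⟩ : V)) : EuclideanSpace ℂ (Fin n)) = u - v from rfl] at h4
    have hp := parallelogram_law_with_norm ℂ (e ⟨u, huV⟩) (e ⟨v, hvV⟩)
    have hs := hγpos c hc
    rw [h1, h2, h3, h4, map_add, map_sub]
    field_simp
    linear_combination hp
  -- S is conjugate-linear
  have hSadd : ∀ u v, Sf (u + v) = Sf u + Sf v := by
    intro u v
    obtain ⟨V, e, c, huV, hvV, hinj, hc, hmm⟩ := hpair u v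
    have h1 := (hbridge V e c hinj hc hmm ⟨u, huV⟩).2
    have h2 := (hbridge V e c hinj hc hmm ⟨v, hvV⟩).2
    have h3 := (hbridge V e c hinj hc hmm (⟨u, huV⟩ + ⟨v, hvV⟩)).2
    rw [show (((⟨u, huV⟩ + ⟨v, hvV⟩ : V)) : EuclideanSpace ℂ (Fin n)) = u + v from rfl] at h3
    rw [h1, h2, h3, map_add, inner_add_left, add_div]
  have hSsmul : ∀ (l : ℂ) v, Sf (l • v) = (starRingEnd ℂ) l * Sf v := by
    intro l v
    obtain ⟨V, e, c, -, hvV, hinj, hc, hmm⟩ := hpair v v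
    have h1 := (hbridge V e c hinj hc hmm ⟨v, hvV⟩).2
    have h2 := (hbridge V e c hinj hc hmm (l • ⟨v, hvV⟩)).2
    rw [show (((l • ⟨v, hvV⟩ : V)) : EuclideanSpace ℂ (Fin n)) = l • v from rfl] at h2
    rw [h1, h2, map_smul, inner_smul_left, mul_div_assoc]
  -- membership characterization
  have hmemK : ∀ x : EuclideanSpace ℂ (Fin n),
      x + p₀ ∈ K ↔ N x ^ 2 - 2 * (Sf x).re - 1 ≤ 0 := by
    intro x
    rcases eq_or_ne x 0 with rfl | hx
    · simp only [zero_add]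
      constructor
      · intro _
        rw [hN0]
        simp [hSf]
      · intro _
        exact interior_subset hp₀
    · obtain ⟨h1, h2⟩ := hτr x hx
      have hone : x + p₀ ∈ K ↔ (1:ℂ) ∈ {t : ℂ | t • x + p₀ ∈ K} := by
        rw [Set.mem_setOf_eq, one_smul]
      rw [hone, h2, mem_closedBall, dist_eq_norm, hNsq]
      simp only [hQf, hSf, if_neg hx]
      have hrpos : 0 < rf x := lt_of_le_of_lt (norm_nonneg _) h1
      rw [norm_le_iff_sq _ _ hrpos.le]
      have hre : ((τf x) * (((rf x ^ 2 - ‖τf x‖ ^ 2)⁻¹ : ℝ) : ℂ)).re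
          = (τf x).re * (rf x ^ 2 - ‖τf x‖ ^ 2)⁻¹ := by
        rw [Complex.mul_re, Complex.ofReal_re, Complex.ofReal_im, mul_zero, sub_zero]
      rw [hre]
      have hnorm1 : ‖(1:ℂ) - τf x‖ ^ 2 = (1 - (τf x).re) ^ 2 + (τf x).im ^ 2 := by
        rw [Complex.sq_norm, Complex.normSq_apply]
        simp only [Complex.sub_re, Complex.sub_im, Complex.one_re, Complex.one_im]
        ring
      have hnormτ : ‖τf x‖ ^ 2 = (τf x).re ^ 2 + (τf x).im ^ 2 := by
        rw [Complex.sq_norm, Complex.normSq_apply]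
        ring
      rw [hnorm1, hnormτ]
      have hG : 0 < rf x ^ 2 - ((τf x).re ^ 2 + (τf x).im ^ 2) := by
        rw [← hnormτ]
        nlinarith [norm_nonneg (τf x), h1]
      have hid : (rf x ^ 2 - ((τf x).re ^ 2 + (τf x).im ^ 2))⁻¹
            - 2 * ((τf x).re * (rf x ^ 2 - ((τf x).re ^ 2 + (τf x).im ^ 2))⁻¹) - 1
          = (rf x ^ 2 - ((τf x).re ^ 2 + (τf x).im ^ 2))⁻¹
            * ((1 - (τf x).re) ^ 2 + (τf x).im ^ 2 - rf x ^ 2) := by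
        field_simp
        ring
      constructor
      · intro h
        rw [hid]
        exact mul_nonpos_of_nonneg_of_nonpos (inv_nonneg.2 hG.le) (by linarith)
      · intro h
        rw [hid] at h
        have h' : (1 - (τf x).re) ^ 2 + (τf x).im ^ 2 - rf x ^ 2 ≤ 0 := by
          by_contra hcon
          push_neg at hcon
          nlinarith [inv_pos.2 hG]
        linarith
  -- assemble
  exact ellipsoid_of_data K p₀
    { N := N, N_zero := hN0, eq_zero := hNeq0, add_le := hNadd,
      smul_eq := hNsmul, par := hNpar } Sf hSadd hSsmul hmemK
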